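/- arXiv:1908.01894 — 5 statements merged into one kernel-verified Lean document; each statement's English description precedes it below -/
import Mathlib

section
/- In the synchronous CONGEST broadcast gossip process with k initial messages on a connected graph of diameter D, for every round r ≥ 1, every vertex v, and every message m: if dist(v, origin(m)) + ℓ = r, then after round r either v has already broadcast m, or v has broadcast at least ℓ distinct messages. -/
/-- The synchronous CONGEST broadcast gossip process with `k` messages on the graph `G`,
where message `m` initially resides at `origin m`.  `B v r` is the message broadcast by
vertex `v` in round `r` (rounds are numbered from `1`), if any.  A vertex may only broadcast
a message it holds (its own, or one received from a neighbor in an earlier round) and has not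
broadcast before; and a vertex with a pending unsent message must broadcast some message. -/
structure GossipProcess {V : Type*} (G : SimpleGraph V) (k : ℕ) (origin : Fin k → V) where
  B : V → ℕ → Option (Fin k)
  init : ∀ v : V, B v 0 = none
  valid : ∀ (v : V) (r : ℕ) (m : Fin k), B v r = some m →
    (origin m = v ∨ ∃ r' < r, ∃ u : V, G.Adj u v ∧ B u r' = some m) ∧
    ¬ ∃ r' < r, B v r' = some m
  active : ∀ (v : V) (r : ℕ), 1 ≤ r →
    (∃ m : Fin k, (origin m = v ∨ ∃ r' < r, ∃ u : V, G.Adj u v ∧ B u r' = some m) ∧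
      ¬ ∃ r' < r, B v r' = some m) → B v r ≠ none

section Aux
variable {V : Type*} {G : SimpleGraph V} {k : ℕ} {origin : Fin k → V}

/-- set of messages sent by `v` by end of round `r` -/
def sentSet (P : GossipProcess G k origin) (v : V) (r : ℕ) : Set (Fin k) :=
  {m' : Fin k | ∃ r' ≤ r, P.B v r' = some m'}

lemma sentSet_mono (P : GossipProcess G k origin) (v : V) {r s : ℕ} (h : r ≤ s) :
    sentSet P v r ⊆ sentSet P v s := by
  rintro m ⟨r', hr', hb⟩; exact ⟨r', hr'.trans h, hb⟩

/-- if `v` has a pending message at round `n+1`, its sent set grows. -/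
lemma sent_grow (P : GossipProcess G k origin) (v : V) (n : ℕ)
    (hpend : ∃ m : Fin k,
      (origin m = v ∨ ∃ r' < n + 1, ∃ u : V, G.Adj u v ∧ P.B u r' = some m) ∧
      ¬ ∃ r' < n + 1, P.B v r' = some m) :
    Set.ncard (sentSet P v n) + 1 ≤ Set.ncard (sentSet P v (n + 1)) := by
  have hne := P.active v (n + 1) (by omega) hpend
  obtain ⟨m'', hm''⟩ := Option.ne_none_iff_exists'.mp hne
  have hval := P.valid v (n + 1) m'' hm''
  have hnotmem : m'' ∉ sentSet P v n := by
    rintro ⟨r', hr', hb⟩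
    exact hval.2 ⟨r', by omega, hb⟩
  have hsub : insert m'' (sentSet P v n) ⊆ sentSet P v (n + 1) := by
    rintro x (rfl | hx)
    · exact ⟨n + 1, le_refl _, hm''⟩
    · exact sentSet_mono P v (Nat.le_succ n) hx
  calc Set.ncard (sentSet P v n) + 1 = Set.ncard (insert m'' (sentSet P v n)) := by
        rw [Set.ncard_insert_of_notMem hnotmem (Set.toFinite _)]
    _ ≤ Set.ncard (sentSet P v (n + 1)) := Set.ncard_le_ncard hsub (Set.toFinite _)

lemma aux_main (hG : G.Connected) (P : GossipProcess G k origin) :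
    ∀ (r : ℕ) (v : V) (m : Fin k) (ℓ : ℕ), G.dist v (origin m) + ℓ = r →
    (∃ r' ≤ r, P.B v r' = some m) ∨ ℓ ≤ Set.ncard (sentSet P v r) := by
  intro r
  induction r with
  | zero =>
    intro v m ℓ h
    right
    omega
  | succ n ih =>
    intro v m ℓ h
    rcases Nat.eq_zero_or_pos ℓ with rfl | hℓ
    · right; exact Nat.zero_le _
    obtain ⟨ℓ', rfl⟩ : ∃ ℓ', ℓ = ℓ' + 1 := ⟨ℓ - 1, by omega⟩
    by_cases hbm : ∃ r' ≤ n + 1, P.B v r' = some m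
    · exact Or.inl hbm
    right
    have hnot : ¬ ∃ r' < n + 1, P.B v r' = some m := by
      rintro ⟨r', hr', hb⟩; exact hbm ⟨r', by omega, hb⟩
    -- v's sent set by round n has at least ℓ' messages
    have hv : ℓ' ≤ Set.ncard (sentSet P v n) := by
      rcases ih v m ℓ' (by omega) with ⟨r', hr', hb⟩ | hle
      · exact absurd ⟨r', by omega, hb⟩ hbm
      · exact hle
    rcases Nat.eq_zero_or_pos (G.dist v (origin m)) with hd0 | hdpos
    · -- v = origin m
      have hveq : origin m = v := by
        have := (SimpleGraph.dist_eq_zero_iff_eq_or_not_reachable (G := G)).mp hd0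
        rcases this with heq | hnr
        · exact heq.symm
        · exact absurd (hG.preconnected v (origin m)) hnr
      have := sent_grow P v n ⟨m, Or.inl hveq, hnot⟩
      omega
    · -- pick a closer neighbor u
      obtain ⟨p, hp⟩ := (hG.preconnected v (origin m)).exists_walk_length_eq_dist
      cases p with
      | nil => simp at hp; simp at hdpos
      | cons hadj q =>
        rename_i w
        have hqd : G.dist w (origin m) + 1 = G.dist v (origin m) := by
          have h1 : G.dist w (origin m) ≤ q.length := SimpleGraph.dist_le q
          have h2 : (SimpleGraph.Walk.cons hadj q).length = q.length + 1 :=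
            SimpleGraph.Walk.length_cons _ _
          have h3 : G.dist v (origin m) ≤ 1 + G.dist w (origin m) := by
            calc G.dist v (origin m) ≤ G.dist v w + G.dist w (origin m) :=
              hG.dist_triangle
            _ ≤ 1 + G.dist w (origin m) := by
              have : G.dist v w ≤ 1 := by
                have := SimpleGraph.dist_le hadj.toWalk
                simpa using this
              omega
          omega
        have hadj' : G.Adj w v := hadj.symm
        -- apply IH to u = w at round n with ℓ'+1
        have hdn : G.dist w (origin m) + (ℓ' + 1) = n := by omega
        rcases ih w m (ℓ' + 1) hdn with ⟨r', hr', hb⟩ | hu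
        · -- w sent m by round n; pending at v
          have := sent_grow P v n ⟨m, Or.inr ⟨r', by omega, w, hadj', hb⟩, hnot⟩
          omega
        · -- w sent ≥ ℓ'+1 messages by round n
          by_cases hsub : sentSet P w n ⊆ sentSet P v n
          · have := Set.ncard_le_ncard hsub (Set.toFinite _)
            have : Set.ncard (sentSet P v n) ≤ Set.ncard (sentSet P v (n+1)) :=
              Set.ncard_le_ncard (sentSet_mono P v (Nat.le_succ n)) (Set.toFinite _)
            omega
          · obtain ⟨m₀, hm₀w, hm₀v⟩ := Set.not_subset.mp hsub
            obtain ⟨r', hr', hb⟩ := hm₀w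
            have hnot₀ : ¬ ∃ r'' < n + 1, P.B v r'' = some m₀ := by
              rintro ⟨r'', hr'', hb''⟩; exact hm₀v ⟨r'', by omega, hb''⟩
            have := sent_grow P v n ⟨m₀, Or.inr ⟨r', by omega, w, hadj', hb⟩, hnot₀⟩
            omega

end Aux

/-- Invariant of broadcast gossip: for every round `r ≥ 1`, vertex `v`, message `m` and
`ℓ` with `dist(v, origin m) + ℓ = r`, after round `r` either `v` has already broadcast `m`,
or `v` has broadcast at least `ℓ` distinct messages. -/
theorem stmt_6 {V : Type*} (G : SimpleGraph V) (hG : G.Connected) (k : ℕ)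
    (origin : Fin k → V) (P : GossipProcess G k origin)
    (r : ℕ) (hr : 1 ≤ r) (v : V) (m : Fin k) (ℓ : ℕ)
    (h : G.dist v (origin m) + ℓ = r) :
    (∃ r' ≤ r, P.B v r' = some m) ∨
      ℓ ≤ Set.ncard {m' : Fin k | ∃ r' ≤ r, P.B v r' = some m'} := by
  exact aux_main hG P r v m ℓ h
end

section
/- The broadcast gossip process for k messages on a connected graph of diameter D delivers all k messages to all vertices within D + k rounds. -/
namespace GossipAux

variable {V : Type*} {G : SimpleGraph V} {k : ℕ} {origin : Fin k → V}

/-- Message `m` is available for broadcasting at vertex `v` at round `r`. -/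
def Avail (P : GossipProcess G k origin) (v : V) (m : Fin k) (r : ℕ) : Prop :=
  origin m = v ∨ ∃ r' < r, ∃ u : V, G.Adj u v ∧ P.B u r' = some m

lemma Avail.mono {P : GossipProcess G k origin} {v : V} {m : Fin k} {r r' : ℕ}
    (h : Avail P v m r) (hrr : r ≤ r') : Avail P v m r' := by
  rcases h with h | ⟨t, ht, u, hu, hB⟩
  · exact Or.inl h
  · exact Or.inr ⟨t, lt_of_lt_of_le ht hrr, u, hu, hB⟩

/-- The set of messages that `v` has broadcast by (the end of) round `t`. -/
noncomputable def S (P : GossipProcess G k origin) (v : V) (t : ℕ) : Finset (Fin k) :=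
  @Finset.filter _ (fun m => ∃ r ≤ t, P.B v r = some m) (Classical.decPred _) Finset.univ

lemma mem_S {P : GossipProcess G k origin} {v : V} {t : ℕ} {m : Fin k} :
    m ∈ S P v t ↔ ∃ r ≤ t, P.B v r = some m := by
  simp [S]

lemma S_zero (P : GossipProcess G k origin) (v : V) : S P v 0 = ∅ := by
  ext m
  simp only [mem_S, Finset.notMem_empty, iff_false]
  rintro ⟨r, hr, hB⟩
  interval_cases r
  simp [P.init v] at hB

lemma S_mono (P : GossipProcess G k origin) (v : V) {t t' : ℕ} (h : t ≤ t') :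
    S P v t ⊆ S P v t' := by
  intro m hm
  rcases mem_S.1 hm with ⟨r, hr, hB⟩
  exact mem_S.2 ⟨r, hr.trans h, hB⟩

lemma S_succ_none {P : GossipProcess G k origin} {v : V} {t : ℕ}
    (h : P.B v (t + 1) = none) : S P v (t + 1) = S P v t := by
  ext m
  simp only [mem_S]
  constructor
  · rintro ⟨r, hr, hB⟩
    rcases Nat.lt_or_ge r (t + 1) with hlt | hge
    · exact ⟨r, by omega, hB⟩
    · have : r = t + 1 := by omega
      subst this
      rw [h] at hB; simp at hB
  · rintro ⟨r, hr, hB⟩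
    exact ⟨r, by omega, hB⟩

lemma S_succ_some {P : GossipProcess G k origin} {v : V} {t : ℕ} {m : Fin k}
    (h : P.B v (t + 1) = some m) :
    (S P v (t + 1)).card = (S P v t).card + 1 := by
  have hnot : m ∉ S P v t := by
    intro hm
    rcases mem_S.1 hm with ⟨r, hr, hB⟩
    exact (P.valid v (t + 1) m h).2 ⟨r, by omega, hB⟩
  have hset : S P v (t + 1) = insert m (S P v t) := by
    ext m'
    simp only [mem_S, Finset.mem_insert]
    constructor
    · rintro ⟨r, hr, hB⟩
      rcases Nat.lt_or_ge r (t + 1) with hlt | hge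
      · exact Or.inr ⟨r, by omega, hB⟩
      · have : r = t + 1 := by omega
        subst this
        rw [h] at hB
        exact Or.inl (by injection hB.symm)
    · rintro (rfl | hm')
      · exact ⟨t + 1, le_refl _, h⟩
      · rcases hm' with ⟨r, hr, hB⟩
        exact ⟨r, by omega, hB⟩
  rw [hset, Finset.card_insert_of_notMem hnot]

lemma S_card_succ_le (P : GossipProcess G k origin) (v : V) (t : ℕ) :
    (S P v (t + 1)).card ≤ (S P v t).card + 1 := by
  cases h : P.B v (t + 1) with
  | none => rw [S_succ_none h]; omega
  | some m => rw [S_succ_some h]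

/-- If `v` is idle at round `t+1 ≥ 1`, it has already sent every message available to it. -/
lemma idle_sent {P : GossipProcess G k origin} {v : V} {t : ℕ} {m : Fin k}
    (h : P.B v (t + 1) = none) (hav : Avail P v m (t + 1)) : m ∈ S P v t := by
  by_contra hm
  refine P.active v (t + 1) (by omega) ⟨m, hav, ?_⟩ h
  rintro ⟨r', hr', hB⟩
  exact hm (mem_S.2 ⟨r', by omega, hB⟩)

/-- Pipelining count for neighbors: `v` has sent by round `t+1` at least as many messages
as its neighbor `u` has sent by round `t`. -/
lemma card_S_adj {P : GossipProcess G k origin} {u v : V} (hadj : G.Adj u v) :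
    ∀ t : ℕ, (S P u t).card ≤ (S P v (t + 1)).card := by
  intro t
  induction t with
  | zero => simp [S_zero]
  | succ t ih =>
    cases h : P.B v (t + 1 + 1) with
    | some m' => rw [S_succ_some h]
                 calc (S P u (t + 1)).card ≤ (S P u t).card + 1 := S_card_succ_le P u t
                 _ ≤ (S P v (t + 1)).card + 1 := by omega
    | none =>
      have hsub : S P u (t + 1) ⊆ S P v (t + 1 + 1) := by
        intro m hm
        rcases mem_S.1 hm with ⟨r, hr, hB⟩
        have hav : Avail P v m (t + 1 + 1) := Or.inr ⟨r, by omega, u, hadj, hB⟩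
        exact S_mono P v (by omega) (idle_sent h hav)
      exact Finset.card_le_card hsub

/-- While a message is available but unsent, the vertex broadcasts a new message each round. -/
lemma activity {P : GossipProcess G k origin} {v : V} {m : Fin k} {a t : ℕ}
    (hav : Avail P v m (a + 1)) (hat : a ≤ t) (hm : m ∉ S P v t) :
    (S P v a).card + (t - a) ≤ (S P v t).card := by
  induction t, hat using Nat.le_induction with
  | base => omega
  | succ t hat ih =>
    have hm' : m ∉ S P v t := fun hx => hm (S_mono P v (by omega) hx)
    have hpend : ∃ m' : Fin k, (origin m' = v ∨ ∃ r' < t + 1, ∃ u : V, G.Adj u v ∧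
        P.B u r' = some m') ∧ ¬ ∃ r' < t + 1, P.B v r' = some m' := by
      refine ⟨m, hav.mono (by omega), ?_⟩
      rintro ⟨r', hr', hB⟩
      exact hm' (mem_S.2 ⟨r', by omega, hB⟩)
    have hne := P.active v (t + 1) (by omega) hpend
    cases h : P.B v (t + 1) with
    | none => exact absurd h hne
    | some m'' =>
      have := S_succ_some h
      have := ih hm'
      omega

lemma card_S_le (P : GossipProcess G k origin) (v : V) (t : ℕ) {m : Fin k}
    (hm : m ∉ S P v t) : (S P v t).card + 1 ≤ k := by
  have hsub : S P v t ⊆ Finset.univ.erase m :=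
    fun m' hm' => Finset.mem_erase.2 ⟨fun h => hm (h ▸ hm'), Finset.mem_univ _⟩
  have := Finset.card_le_card hsub
  have hcard : (Finset.univ.erase m).card = k - 1 := by
    rw [Finset.card_erase_of_mem (Finset.mem_univ m), Finset.card_univ, Fintype.card_fin]
  have hk1 : 1 ≤ k := Nat.one_le_iff_ne_zero.2 (by
    rintro rfl; exact absurd m.2 (Nat.not_lt_zero _))
  omega

/-- A neighbor one step closer to `o`. -/
lemma exists_closer_adj (hG : G.Connected) {o v : V} {d : ℕ}
    (hd : G.dist o v = d + 1) : ∃ u : V, G.Adj u v ∧ G.dist o u = d := by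
  obtain ⟨p, hp⟩ := hG.exists_walk_length_eq_dist o v
  rw [hd] at hp
  have hq : p.reverse.length = d + 1 := by rw [SimpleGraph.Walk.length_reverse, hp]
  cases hrev : p.reverse with
  | nil => rw [hrev] at hq; simp at hq
  | cons hadj q =>
    rename_i u
    rw [hrev] at hq
    simp only [SimpleGraph.Walk.length_cons] at hq
    refine ⟨u, hadj.symm, ?_⟩
    have h1 : G.dist o u ≤ d := by
      have h := SimpleGraph.dist_le q.reverse
      rw [SimpleGraph.Walk.length_reverse] at h
      omega
    have h2 : G.dist o v ≤ G.dist o u + G.dist u v :=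
      hG.dist_triangle
    have h3 : G.dist u v ≤ 1 := by
      have := SimpleGraph.dist_le (SimpleGraph.Walk.cons hadj.symm SimpleGraph.Walk.nil)
      simpa using this
    omega

/-- Key pipelining invariant: if `v` has not yet sent `m` by round `t`, then
`t ≤ dist(origin m, v) + (number of messages v has sent by round t)`. -/
lemma key (P : GossipProcess G k origin) (hG : G.Connected) (m : Fin k) :
    ∀ (d : ℕ) (v : V), G.dist (origin m) v = d →
      ∀ t : ℕ, m ∉ S P v t → t ≤ d + (S P v t).card := by
  intro d
  induction d with
  | zero =>
    intro v hd t hm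
    have hv : origin m = v := (hG.dist_eq_zero_iff).1 hd
    have hav : Avail P v m (0 + 1) := Or.inl hv
    have := activity hav (Nat.zero_le t) hm
    rw [S_zero] at this
    simpa using this
  | succ d ih =>
    intro v hd t hm
    obtain ⟨u, hadj, hdu⟩ := exists_closer_adj hG hd
    cases t with
    | zero => omega
    | succ t0 =>
      by_cases hmu : m ∈ S P u t0
      · -- u sent m at some minimal round t' ≤ t0
        rcases mem_S.1 hmu with ⟨r0, hr0, hB0⟩
        have hex : ∃ r, P.B u r = some m := ⟨r0, hB0⟩
        have hfind : P.B u (Nat.find hex) = some m := Nat.find_spec hex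
        have ht'le : Nat.find hex ≤ t0 := le_trans (Nat.find_min' hex hB0) hr0
        have ht'pos : 1 ≤ Nat.find hex := by
          rcases Nat.eq_zero_or_pos (Nat.find hex) with h0 | h1
          · rw [h0, P.init u] at hfind; simp at hfind
          · exact h1
        obtain ⟨t'', ht''⟩ : ∃ t'', Nat.find hex = t'' + 1 := ⟨Nat.find hex - 1, by omega⟩
        rw [ht''] at hfind ht'le
        have hnot'' : m ∉ S P u t'' := by
          intro hx
          rcases mem_S.1 hx with ⟨r, hr, hB⟩
          exact absurd hB (Nat.find_min hex (by omega))
        have hIH : t'' ≤ d + (S P u t'').card := ih u hdu t'' hnot''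
        have hD' : (S P u t'').card ≤ (S P v (t'' + 1)).card := card_S_adj hadj t''
        have hav : Avail P v m ((t'' + 1) + 1) :=
          Or.inr ⟨t'' + 1, by omega, u, hadj, hfind⟩
        have hact := activity hav (by omega : t'' + 1 ≤ t0 + 1) hm
        omega
      · have hIH : t0 ≤ d + (S P u t0).card := ih u hdu t0 hmu
        have hD' : (S P u t0).card ≤ (S P v (t0 + 1)).card := card_S_adj hadj t0
        omega

/-- Every vertex broadcasts every message by round `dist(origin m, v) + k`. -/
lemma delivered (P : GossipProcess G k origin) (hG : G.Connected) (hk : 1 ≤ k)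
    (v : V) (m : Fin k) :
    ∃ r ≤ G.dist (origin m) v + k, P.B v r = some m := by
  set d := G.dist (origin m) v with hd
  have hmem : m ∈ S P v (d + k) := by
    by_contra hm
    have hkey := key P hG m d v hd.symm (d + k) hm
    have hcard := card_S_le P v (d + k) hm
    omega
  exact mem_S.1 hmem

end GossipAux

/-- Broadcast gossip with `k ≥ 1` messages on a connected graph of diameter at most `D`
delivers every message to every vertex within `D + k` rounds: each vertex either originated
the message or receives it from a neighbor's broadcast in some round `≤ D + k`. -/
theorem stmt_7 {V : Type*} (G : SimpleGraph V) (hG : G.Connected)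
    (D : ℕ) (hD : ∀ u v : V, G.dist u v ≤ D)
    (k : ℕ) (hk : 1 ≤ k) (origin : Fin k → V) (P : GossipProcess G k origin) :
    ∀ (v : V) (m : Fin k),
      origin m = v ∨ ∃ r ≤ D + k, ∃ u : V, G.Adj u v ∧ P.B u r = some m := by
  intro v m
  by_cases hov : origin m = v
  · exact Or.inl hov
  · right
    have hdpos : G.dist (origin m) v ≠ 0 := by
      intro h0
      exact hov (hG.dist_eq_zero_iff.1 h0)
    obtain ⟨dm1, hdm1⟩ : ∃ d, G.dist (origin m) v = d + 1 :=
      ⟨G.dist (origin m) v - 1, by omega⟩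
    obtain ⟨u, hadj, _⟩ := GossipAux.exists_closer_adj hG hdm1
    obtain ⟨r, hr, hB⟩ := GossipAux.delivered P hG hk u m
    have : G.dist (origin m) u ≤ D := hD _ _
    exact ⟨r, by omega, u, hadj, hB⟩
end

section
/- If any schedule in the mobile telephone model achieves pairwise throughput T on instance (G, F), then the flow network D_{2T} admits a concurrent multi-commodity flow of value 2T. Consequently the optimal throughput is at most τ*/2, where τ* is the largest τ for which D_τ has a concurrent flow of value τ. -/
/-- A pairwise schedule in the mobile telephone model for the flow pairs `F` on `G`:
packets are pairs `(commodity, index)`; each round's connections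
`(sender, receiver, commodity, index)` respect adjacency and form a matching (so every
vertex handles at most one packet per round), and a packet can only be sent by the source of
its commodity or by a vertex that received it in an earlier round. -/
structure PairSchedule {V : Type*} (G : SimpleGraph V) {K : ℕ} (F : Fin K → V × V) where
  M : ℕ → Set (V × V × Fin K × ℕ)
  adj : ∀ (r : ℕ) (x : V × V × Fin K × ℕ), x ∈ M r → G.Adj x.1 x.2.1
  matching : ∀ (r : ℕ) (x y : V × V × Fin K × ℕ), x ∈ M r → y ∈ M r → x ≠ y →
    x.1 ≠ y.1 ∧ x.1 ≠ y.2.1 ∧ x.2.1 ≠ y.1 ∧ x.2.1 ≠ y.2.1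
  valid : ∀ (r : ℕ) (x : V × V × Fin K × ℕ), x ∈ M r →
    x.1 = (F x.2.2.1).1 ∨ ∃ r' < r, ∃ w : V, (w, x.1, x.2.2) ∈ M r'

/-- Packet `(i, j)` has reached the destination of pair `i` by round `r`. -/
def PDelivered {V : Type*} {G : SimpleGraph V} {K : ℕ} {F : Fin K → V × V}
    (σ : PairSchedule G F) (i : Fin K) (j r : ℕ) : Prop :=
  ∃ t ≤ r, ∃ u : V, (u, (F i).2, i, j) ∈ σ.M t

/-- The schedule achieves pairwise throughput `T`. -/
def PThroughput {V : Type*} {G : SimpleGraph V} {K : ℕ} {F : Fin K → V × V}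
    (σ : PairSchedule G F) (T : ℝ) : Prop :=
  ∃ r0 : ℕ, ∀ r : ℕ, r0 ≤ r → ∀ (i : Fin K) (j : ℕ), 1 ≤ j → (j : ℝ) ≤ T * r →
    PDelivered σ i j r

/-- The number of pairs of `F` in which the vertex `v` occurs. -/
def tOcc {V : Type*} [Fintype V] [DecidableEq V] {K : ℕ} (F : Fin K → V × V) (v : V) : ℕ :=
  (Finset.univ.filter (fun i : Fin K => (F i).1 = v ∨ (F i).2 = v)).card

/-- `f` is a concurrent multi-commodity flow of value `val` on the split network `D_τ`:
vertices are split into in-copies (`Sum.inl`) and out-copies (`Sum.inr`); edges are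
`(u^out, v^in)` for edges `uv` of `G` (infinite capacity) and internal edges `(v^in, v^out)`
of capacity `1 + t_v·τ/2`; commodity `i` goes from `(F i).1^in` to `(F i).2^out`, each
commodity shipping at least `val`. -/
def IsSplitFlow {V : Type*} [Fintype V] [DecidableEq V] (G : SimpleGraph V) {K : ℕ}
    (F : Fin K → V × V) (τ : ℝ) (f : Fin K → (V ⊕ V) → (V ⊕ V) → ℝ) (val : ℝ) : Prop :=
  (∀ (i : Fin K) (a b : V ⊕ V), 0 ≤ f i a b) ∧
  (∀ (i : Fin K) (a b : V ⊕ V), f i a b ≠ 0 →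
    (∃ u w : V, a = Sum.inr u ∧ b = Sum.inl w ∧ G.Adj u w) ∨
    (∃ w : V, a = Sum.inl w ∧ b = Sum.inr w)) ∧
  (∀ (i : Fin K) (a : V ⊕ V), a ≠ Sum.inl (F i).1 → a ≠ Sum.inr (F i).2 →
    ∑ b : V ⊕ V, f i b a = ∑ b : V ⊕ V, f i a b) ∧
  (∀ v : V, ∑ i : Fin K, f i (Sum.inl v) (Sum.inr v) ≤ 1 + (tOcc F v : ℝ) * τ / 2) ∧
  (∀ i : Fin K, val ≤ ∑ b : V ⊕ V, f i (Sum.inl (F i).1) b)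


namespace Stmt13Aux

open Finset SimpleGraph Filter Topology

variable {V : Type*} {G : SimpleGraph V}

section PathLemmas
variable {s d : V}

lemma no_dart_snd_start {p : G.Walk s d} (hp : p.IsPath) :
    ∀ dd ∈ p.darts, dd.snd ≠ s := by
  intro dd hdd h
  have h1 : s ∈ p.darts.map (·.snd) := List.mem_map.mpr ⟨dd, hdd, h⟩
  rw [SimpleGraph.Walk.map_snd_darts] at h1
  have h2 := hp.support_nodup
  rw [p.support_eq_cons] at h2
  exact (List.nodup_cons.mp h2).1 h1

lemma no_dart_fst_end {p : G.Walk s d} (hp : p.IsPath) :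
    ∀ dd ∈ p.darts, dd.fst ≠ d := by
  intro dd hdd h
  have h1 : d ∈ p.darts.map (·.fst) := List.mem_map.mpr ⟨dd, hdd, h⟩
  have h2 := hp.support_nodup
  rw [← p.map_fst_darts_append] at h2
  exact (List.disjoint_of_nodup_append h2) h1 (List.mem_singleton_self d)

lemma exists_dart_snd {p : G.Walk s d} {v : V} (hv : v ∈ p.support) (hvs : v ≠ s) :
    ∃ dd ∈ p.darts, dd.snd = v := by
  have h1 : v ∈ p.support.tail := by
    rw [p.support_eq_cons] at hv
    rcases List.mem_cons.mp hv with h | h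
    · exact absurd h hvs
    · exact h
  rw [← SimpleGraph.Walk.map_snd_darts] at h1
  obtain ⟨dd, hdd, h⟩ := List.mem_map.mp h1
  exact ⟨dd, hdd, h⟩

lemma exists_dart_fst {p : G.Walk s d} {v : V} (hv : v ∈ p.support) (hvd : v ≠ d) :
    ∃ dd ∈ p.darts, dd.fst = v := by
  have h1 : v ∈ p.darts.map (·.fst) ++ [d] := by
    rw [p.map_fst_darts_append]; exact hv
  rcases List.mem_append.mp h1 with h | h
  · obtain ⟨dd, hdd, h⟩ := List.mem_map.mp h
    exact ⟨dd, hdd, h⟩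
  · exact absurd (List.mem_singleton.mp h) hvd

lemma dart_snd_unique {p : G.Walk s d} (hp : p.IsPath) {dd dd' : G.Dart}
    (h1 : dd ∈ p.darts) (h2 : dd' ∈ p.darts) (h : dd.snd = dd'.snd) : dd = dd' := by
  have hn : (p.darts.map (·.snd)).Nodup := by
    rw [SimpleGraph.Walk.map_snd_darts]
    have h2 := hp.support_nodup
    rw [p.support_eq_cons] at h2
    exact (List.nodup_cons.mp h2).2
  exact List.inj_on_of_nodup_map hn h1 h2 h

lemma dart_fst_unique {p : G.Walk s d} (hp : p.IsPath) {dd dd' : G.Dart}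
    (h1 : dd ∈ p.darts) (h2 : dd' ∈ p.darts) (h : dd.fst = dd'.fst) : dd = dd' := by
  have hn : (p.darts.map (·.fst)).Nodup := by
    rw [SimpleGraph.Walk.map_fst_darts]
    exact (List.dropLast_sublist _).nodup hp.support_nodup
  exact List.inj_on_of_nodup_map hn h1 h2 h


variable [DecidableEq V]

/-- unit flow along a path in the split network -/
def pflow (p : G.Walk s d) : (V ⊕ V) → (V ⊕ V) → ℝ
  | Sum.inr u, Sum.inl w => if ∃ dd ∈ p.darts, dd.fst = u ∧ dd.snd = w then 1 else 0
  | Sum.inl v, Sum.inr w => if v = w then (if v ∈ p.support then 1 else 0) else 0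
  | _, _ => 0

lemma pflow_nonneg (p : G.Walk s d) (a b : V ⊕ V) : 0 ≤ pflow p a b := by
  rcases a with a | a <;> rcases b with b | b <;> simp only [pflow] <;> positivity

lemma pflow_le_one (p : G.Walk s d) (a b : V ⊕ V) : pflow p a b ≤ 1 := by
  rcases a with a | a <;> rcases b with b | b <;> simp only [pflow] <;>
    (try split_ifs) <;> norm_num

lemma pflow_zero (p : G.Walk s d) (a b : V ⊕ V)
    (h : ¬ ((∃ u w : V, a = Sum.inr u ∧ b = Sum.inl w ∧ G.Adj u w) ∨
      (∃ w : V, a = Sum.inl w ∧ b = Sum.inr w))) : pflow p a b = 0 := by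
  rcases a with a | a <;> rcases b with b | b <;> simp only [pflow]
  · rw [if_neg]; intro hab; exact h (Or.inr ⟨a, rfl, by rw [hab]⟩)
  · rw [if_neg]; rintro ⟨dd, hdd, h1, h2⟩
    exact h (Or.inl ⟨a, b, rfl, rfl, h1 ▸ h2 ▸ dd.adj⟩)

lemma pflow_through (p : G.Walk s d) (v : V) :
    pflow p (Sum.inl v) (Sum.inr v) = if v ∈ p.support then 1 else 0 := by
  simp [pflow]

variable [Fintype V]

lemma sum_in_darts {p : G.Walk s d} (hp : p.IsPath) {v : V} (hvs : v ≠ s) :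
    (∑ u : V, pflow p (Sum.inr u) (Sum.inl v)) = if v ∈ p.support then 1 else 0 := by
  simp only [pflow]
  rw [Finset.sum_boole]
  by_cases hv : v ∈ p.support
  · rw [if_pos hv]
    obtain ⟨dd0, hdd0, hsnd⟩ := exists_dart_snd hv hvs
    have : (univ.filter fun u => ∃ dd ∈ p.darts, dd.fst = u ∧ dd.snd = v) = {dd0.fst} := by
      ext u
      simp only [mem_filter, mem_univ, true_and, mem_singleton]
      constructor
      · rintro ⟨dd, hdd, rfl, h2⟩
        rw [dart_snd_unique hp hdd hdd0 (h2.trans hsnd.symm)]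
      · rintro rfl; exact ⟨dd0, hdd0, rfl, hsnd⟩
    rw [this, Finset.card_singleton, Nat.cast_one]
  · rw [if_neg hv]
    have : (univ.filter fun u => ∃ dd ∈ p.darts, dd.fst = u ∧ dd.snd = v) = ∅ := by
      ext u
      simp only [mem_filter, mem_univ, true_and, Finset.notMem_empty, iff_false]
      rintro ⟨dd, hdd, rfl, h2⟩
      exact hv (h2 ▸ Walk.dart_snd_mem_support_of_mem_darts p hdd)
    rw [this, Finset.card_empty, Nat.cast_zero]

lemma sum_out_darts {p : G.Walk s d} (hp : p.IsPath) {v : V} (hvd : v ≠ d) :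
    (∑ w : V, pflow p (Sum.inr v) (Sum.inl w)) = if v ∈ p.support then 1 else 0 := by
  simp only [pflow]
  rw [Finset.sum_boole]
  by_cases hv : v ∈ p.support
  · rw [if_pos hv]
    obtain ⟨dd0, hdd0, hfst⟩ := exists_dart_fst hv hvd
    have : (univ.filter fun w => ∃ dd ∈ p.darts, dd.fst = v ∧ dd.snd = w) = {dd0.snd} := by
      ext w
      simp only [mem_filter, mem_univ, true_and, mem_singleton]
      constructor
      · rintro ⟨dd, hdd, h1, rfl⟩
        rw [dart_fst_unique hp hdd hdd0 (h1.trans hfst.symm)]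
      · rintro rfl; exact ⟨dd0, hdd0, hfst, rfl⟩
    rw [this, Finset.card_singleton, Nat.cast_one]
  · rw [if_neg hv]
    have : (univ.filter fun w => ∃ dd ∈ p.darts, dd.fst = v ∧ dd.snd = w) = ∅ := by
      ext w
      simp only [mem_filter, mem_univ, true_and, Finset.notMem_empty, iff_false]
      rintro ⟨dd, hdd, rfl, h2⟩
      exact hv (Walk.dart_fst_mem_support_of_mem_darts p hdd)
    rw [this, Finset.card_empty, Nat.cast_zero]

lemma pflow_conserve {p : G.Walk s d} (hp : p.IsPath) (a : V ⊕ V)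
    (has : a ≠ Sum.inl s) (had : a ≠ Sum.inr d) :
    (∑ b : V ⊕ V, pflow p b a) = ∑ b : V ⊕ V, pflow p a b := by
  rcases a with v | v
  · have hvs : v ≠ s := fun h => has (by rw [h])
    rw [Fintype.sum_sum_type, Fintype.sum_sum_type]
    have h1 : (∑ u : V, pflow p (Sum.inl u) (Sum.inl v)) = 0 := by
      apply Finset.sum_eq_zero; intro u _; simp [pflow]
    have h2 : (∑ w : V, pflow p (Sum.inl v) (Sum.inl w)) = 0 := by
      apply Finset.sum_eq_zero; intro w _; simp [pflow]
    rw [h1, h2, sum_in_darts hp hvs, zero_add, zero_add]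
    have h3 : (∑ w : V, pflow p (Sum.inl v) (Sum.inr w))
        = if v ∈ p.support then 1 else 0 := by
      simp only [pflow]
      rw [Finset.sum_ite_eq, if_pos (Finset.mem_univ v)]
    rw [h3]
  · have hvd : v ≠ d := fun h => had (by rw [h])
    rw [Fintype.sum_sum_type, Fintype.sum_sum_type]
    have h1 : (∑ u : V, pflow p (Sum.inr u) (Sum.inr v)) = 0 := by
      apply Finset.sum_eq_zero; intro u _; simp [pflow]
    have h2 : (∑ w : V, pflow p (Sum.inr v) (Sum.inr w)) = 0 := by
      apply Finset.sum_eq_zero; intro w _; simp [pflow]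
    rw [h1, h2, sum_out_darts hp hvd, add_zero, add_zero]
    have h3 : (∑ u : V, pflow p (Sum.inl u) (Sum.inr v))
        = if v ∈ p.support then 1 else 0 := by
      simp only [pflow]
      rw [Finset.sum_ite_eq', if_pos (Finset.mem_univ v)]
    rw [h3]

lemma touch_bound {p : G.Walk s d} (hp : p.IsPath) (hsd : s ≠ d) (v : V) :
    2 * (if v ∈ p.support then 1 else 0) ≤
      ((p.darts.map SimpleGraph.Dart.toProd).toFinset.filter
        (fun e => e.1 = v ∨ e.2 = v)).card
      + (if v = s ∨ v = d then 1 else 0) := by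
  by_cases hv : v ∈ p.support
  · rw [if_pos hv]
    by_cases hvd : v = d
    · obtain ⟨dd, hdd, hsnd⟩ := exists_dart_snd hv (hvd ▸ (Ne.symm hsd))
      have hmem : dd.toProd ∈ (p.darts.map SimpleGraph.Dart.toProd).toFinset.filter
          (fun e => e.1 = v ∨ e.2 = v) := by
        rw [Finset.mem_filter]
        exact ⟨List.mem_toFinset.mpr (List.mem_map.mpr ⟨dd, hdd, rfl⟩), Or.inr hsnd⟩
      have := Finset.card_pos.mpr ⟨_, hmem⟩
      rw [if_pos (Or.inr hvd)]; omega
    by_cases hvs : v = s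
    · obtain ⟨dd, hdd, hfst⟩ := exists_dart_fst hv hvd
      have hmem : dd.toProd ∈ (p.darts.map SimpleGraph.Dart.toProd).toFinset.filter
          (fun e => e.1 = v ∨ e.2 = v) := by
        rw [Finset.mem_filter]
        exact ⟨List.mem_toFinset.mpr (List.mem_map.mpr ⟨dd, hdd, rfl⟩), Or.inl hfst⟩
      have := Finset.card_pos.mpr ⟨_, hmem⟩
      rw [if_pos (Or.inl hvs)]; omega
    · obtain ⟨dd1, hdd1, hsnd⟩ := exists_dart_snd hv hvs
      obtain ⟨dd2, hdd2, hfst⟩ := exists_dart_fst hv hvd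
      have hmem1 : dd1.toProd ∈ (p.darts.map SimpleGraph.Dart.toProd).toFinset.filter
          (fun e => e.1 = v ∨ e.2 = v) := by
        rw [Finset.mem_filter]
        exact ⟨List.mem_toFinset.mpr (List.mem_map.mpr ⟨dd1, hdd1, rfl⟩), Or.inr hsnd⟩
      have hmem2 : dd2.toProd ∈ (p.darts.map SimpleGraph.Dart.toProd).toFinset.filter
          (fun e => e.1 = v ∨ e.2 = v) := by
        rw [Finset.mem_filter]
        exact ⟨List.mem_toFinset.mpr (List.mem_map.mpr ⟨dd2, hdd2, rfl⟩), Or.inl hfst⟩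
      have hne : dd1.toProd ≠ dd2.toProd := by
        intro h
        have : dd1 = dd2 := SimpleGraph.Dart.ext _ _ h
        apply dd1.fst_ne_snd
        rw [hsnd, this, hfst]
      have := Finset.one_lt_card.mpr ⟨_, hmem1, _, hmem2, hne⟩
      omega
  · simp [hv]


end PathLemmas

lemma traj {V : Type*} {G : SimpleGraph V} {K : ℕ} {F : Fin K → V × V}
    (σ : PairSchedule G F) :
    ∀ (t : ℕ) (u v : V) (i : Fin K) (j : ℕ), (u, v, i, j) ∈ σ.M t →
    ∃ p : G.Walk (F i).1 v, ∀ dd ∈ p.darts, ∃ t' ≤ t,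
      (dd.fst, dd.snd, i, j) ∈ σ.M t' := by
  intro t
  induction t using Nat.strong_induction_on with
  | _ t IH =>
    intro u v i j hx
    have hadj : G.Adj u v := σ.adj t _ hx
    rcases σ.valid t _ hx with hsrc | ⟨t', ht', w, hw⟩
    · simp only at hsrc
      subst hsrc
      refine ⟨SimpleGraph.Walk.cons hadj SimpleGraph.Walk.nil, ?_⟩
      intro dd hdd
      simp only [Walk.darts_cons, Walk.darts_nil, List.mem_singleton] at hdd
      subst hdd
      exact ⟨t, le_rfl, hx⟩
    · obtain ⟨q, hq⟩ := IH t' ht' w u i j hw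
      refine ⟨q.concat hadj, ?_⟩
      intro dd hdd
      rw [SimpleGraph.Walk.darts_concat, List.concat_eq_append] at hdd
      rcases List.mem_append.mp hdd with h | h
      · obtain ⟨t'', ht'', hM⟩ := hq dd h
        exact ⟨t'', le_trans ht'' (le_of_lt ht'), hM⟩
      · rw [List.mem_singleton] at h
        subst h
        exact ⟨t, le_rfl, hx⟩


lemma count_rounds {V : Type*} [Fintype V] [DecidableEq V] {G : SimpleGraph V} {K : ℕ}
    {F : Fin K → V × V} (σ : PairSchedule G F) {R : ℕ} {JS : Type*} [Fintype JS]
    (jval : JS → ℕ) (hjinj : Function.Injective jval)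
    (P : ∀ (i : Fin K), JS → G.Walk (F i).1 (F i).2)
    (hPev : ∀ (i : Fin K) (j : JS), ∀ dd ∈ (P i j).darts,
      ∃ t ≤ R, (dd.fst, dd.snd, i, jval j) ∈ σ.M t)
    (v : V) :
    ∑ i : Fin K, ∑ j : JS,
      (((P i j).darts.map SimpleGraph.Dart.toProd).toFinset.filter
        (fun e => e.1 = v ∨ e.2 = v)).card ≤ R + 1 := by
  classical
  set tset : Fin K × JS → Finset (V × V) := fun p =>
    ((P p.1 p.2).darts.map SimpleGraph.Dart.toProd).toFinset.filter
      (fun e => e.1 = v ∨ e.2 = v) with htset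
  set S : Finset ((Fin K × JS) × (V × V)) := univ.filter (fun q => q.2 ∈ tset q.1) with hS
  have hmemS : ∀ q : (Fin K × JS) × (V × V), q ∈ S ↔ q.2 ∈ tset q.1 := by
    intro q; simp [hS]
  have hdart : ∀ q : (Fin K × JS) × (V × V), q ∈ S →
      ∃ dd ∈ (P q.1.1 q.1.2).darts, dd.toProd = q.2 := by
    intro q hq
    rw [hmemS] at hq
    obtain ⟨hq1, _⟩ := Finset.mem_filter.mp hq
    obtain ⟨dd, hdd, h⟩ := List.mem_map.mp (List.mem_toFinset.mp hq1)
    exact ⟨dd, hdd, h⟩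
  have htouch : ∀ q : (Fin K × JS) × (V × V), q ∈ S → (q.2.1 = v ∨ q.2.2 = v) := by
    intro q hq
    rw [hmemS] at hq
    exact (Finset.mem_filter.mp hq).2
  -- sum equals card of S
  have hcard : (∑ i : Fin K, ∑ j : JS, (tset (i, j)).card) = S.card := by
    rw [Finset.card_eq_sum_card_fiberwise
      (f := fun q : (Fin K × JS) × (V × V) => q.1) (t := univ) (fun x _ => mem_univ _)]
    rw [Fintype.sum_prod_type]
    refine Finset.sum_congr rfl fun i _ => Finset.sum_congr rfl fun j _ => ?_
    refine (Finset.card_bij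
      (fun q (_ : q ∈ (S.filter (fun q => q.1 = (i, j)))) => q.2) ?_ ?_ ?_).symm
    · intro q hq
      obtain ⟨hq1, hq2⟩ := Finset.mem_filter.mp hq
      rw [← hq2]
      exact (hmemS q).mp hq1
    · intro q hq q' hq' h
      obtain ⟨_, hq2⟩ := Finset.mem_filter.mp hq
      obtain ⟨_, hq2'⟩ := Finset.mem_filter.mp hq'
      exact Prod.ext (hq2.trans hq2'.symm) h
    · intro e he
      refine ⟨((i, j), e), Finset.mem_filter.mpr ⟨(hmemS ((i, j), e)).mpr he, rfl⟩, rfl⟩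
  show (∑ i : Fin K, ∑ j : JS, (tset (i, j)).card) ≤ R + 1
  rw [hcard]
  -- round choice
  have hrnd0 : ∀ q : (Fin K × JS) × (V × V), ∃ t : ℕ,
      (∃ dd ∈ (P q.1.1 q.1.2).darts, dd.toProd = q.2) →
      (t ≤ R ∧ (q.2.1, q.2.2, q.1.1, jval q.1.2) ∈ σ.M t) := by
    intro q
    by_cases h : ∃ dd ∈ (P q.1.1 q.1.2).darts, dd.toProd = q.2
    · obtain ⟨dd, hdd, htp⟩ := h
      obtain ⟨t, ht, hM⟩ := hPev q.1.1 q.1.2 dd hdd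
      refine ⟨t, fun _ => ⟨ht, ?_⟩⟩
      have h1 : q.2.1 = dd.fst := by rw [← htp]
      have h2 : q.2.2 = dd.snd := by rw [← htp]
      rw [h1, h2]; exact hM
    · exact ⟨0, fun hc => absurd hc h⟩
  choose rnd hrnd using hrnd0
  have := Finset.card_le_card_of_injOn rnd
    (fun q hq => Finset.mem_range.mpr (Nat.lt_succ_of_le (hrnd q (hdart q hq)).1))
    (fun q hq q' hq' hr => by
      have hq := Finset.mem_coe.mp hq
      have hq' := Finset.mem_coe.mp hq'
      have hM := (hrnd q (hdart q hq)).2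
      have hM' := (hrnd q' (hdart q' hq')).2
      rw [hr] at hM
      by_cases hEq : ((q.2.1, q.2.2, q.1.1, jval q.1.2) : V × V × Fin K × ℕ)
          = (q'.2.1, q'.2.2, q'.1.1, jval q'.1.2)
      · simp only [Prod.mk.injEq] at hEq
        obtain ⟨h1, h2, h3, h4⟩ := hEq
        exact Prod.ext (Prod.ext h3 (hjinj h4)) (Prod.ext h1 h2)
      · exfalso
        obtain ⟨ha, hb, hc, hd⟩ := σ.matching _ _ _ hM hM' hEq
        simp only at ha hb hc hd
        rcases htouch q hq with h | h <;> rcases htouch q' hq' with h' | h' <;>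
          [exact ha (h.trans h'.symm); exact hb (h.trans h'.symm);
           exact hc (h.trans h'.symm); exact hd (h.trans h'.symm)])
  simpa using this


lemma keyLemma [Fintype V] [DecidableEq V] {K : ℕ}
    {F : Fin K → V × V} (hne : ∀ i : Fin K, (F i).1 ≠ (F i).2) (σ : PairSchedule G F)
    {T : ℝ} (hT : 0 < T) {r0 : ℕ}
    (hr0 : ∀ r : ℕ, r0 ≤ r → ∀ (i : Fin K) (j : ℕ), 1 ≤ j → (j : ℝ) ≤ T * r →
      PDelivered σ i j r)
    {R : ℕ} (hRr0 : r0 ≤ R) (h2 : (2:ℝ) ≤ T * R) :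
    ∃ f : Fin K → (V ⊕ V) → (V ⊕ V) → ℝ,
      (∀ (i : Fin K) (a b : V ⊕ V), f i a b ∈ Set.Icc (0:ℝ) (2*T)) ∧
      (∀ (i : Fin K) (a b : V ⊕ V),
        ¬ ((∃ u w : V, a = Sum.inr u ∧ b = Sum.inl w ∧ G.Adj u w) ∨
          (∃ w : V, a = Sum.inl w ∧ b = Sum.inr w)) → f i a b = 0) ∧
      (∀ (i : Fin K) (a : V ⊕ V), a ≠ Sum.inl (F i).1 → a ≠ Sum.inr (F i).2 →
        ∑ b : V ⊕ V, f i b a = ∑ b : V ⊕ V, f i a b) ∧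
      (∀ v : V, ∑ i : Fin K, f i (Sum.inl v) (Sum.inr v) ≤
        T * ((R:ℝ)+1) / (T * R - 1) + (tOcc F v : ℝ) * T) ∧
      (∀ i : Fin K, 2*T ≤ ∑ b : V ⊕ V, f i (Sum.inl (F i).1) b) := by
  classical
  set N : ℕ := ⌊T * (R:ℝ)⌋₊ with hNdef
  have hTRnn : (0:ℝ) ≤ T * R := le_trans (by norm_num) h2
  have hN1 : 1 ≤ N := Nat.le_floor (by exact_mod_cast le_trans (by norm_num) h2)
  have hNpos : (0:ℝ) < N := by exact_mod_cast Nat.lt_of_lt_of_le Nat.zero_lt_one hN1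
  have hNle : (N:ℝ) ≤ T * R := Nat.floor_le hTRnn
  -- choose delivery paths
  have hdel : ∀ (i : Fin K) (j : ↥(Finset.Icc 1 N)),
      ∃ P : G.Walk (F i).1 (F i).2, P.IsPath ∧ ∀ dd ∈ P.darts,
        ∃ t ≤ R, (dd.fst, dd.snd, i, (j:ℕ)) ∈ σ.M t := by
    intro i j
    obtain ⟨hj1, hj2⟩ := Finset.mem_Icc.mp j.2
    have hjle : ((j:ℕ):ℝ) ≤ T * R := le_trans (by exact_mod_cast hj2) hNle
    obtain ⟨t, ht, u, hu⟩ := hr0 R hRr0 i (j:ℕ) hj1 hjle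
    obtain ⟨p, hp⟩ := traj σ t u (F i).2 i (j:ℕ) hu
    refine ⟨p.bypass, p.bypass_isPath, fun dd hdd => ?_⟩
    obtain ⟨t', ht', hM⟩ := hp dd (p.darts_bypass_subset hdd)
    exact ⟨t', le_trans ht' ht, hM⟩
  choose P hPpath hPev using hdel
  have hcardJ : (Fintype.card ↥(Finset.Icc 1 N) : ℝ) = (N:ℝ) := by
    rw [Fintype.card_coe, Nat.card_Icc]
    simp
  refine ⟨fun i a b => (2*T/(N:ℝ)) * ∑ j : ↥(Finset.Icc 1 N), pflow (P i j) a b, ?_, ?_, ?_, ?_, ?_⟩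
  · intro i a b
    dsimp only
    constructor
    · apply mul_nonneg (by positivity)
      exact Finset.sum_nonneg fun j _ => pflow_nonneg _ _ _
    · have hsum : (∑ j : ↥(Finset.Icc 1 N), pflow (P i j) a b) ≤ (N:ℝ) := by
        calc (∑ j : ↥(Finset.Icc 1 N), pflow (P i j) a b) ≤ ∑ j : ↥(Finset.Icc 1 N), 1 :=
              Finset.sum_le_sum fun j _ => pflow_le_one _ _ _
          _ = (N:ℝ) := by rw [Finset.sum_const, Finset.card_univ, nsmul_eq_mul, mul_one]
                          exact hcardJ
      calc (2*T/(N:ℝ)) * ∑ j : ↥(Finset.Icc 1 N), pflow (P i j) a b ≤ (2*T/(N:ℝ)) * (N:ℝ) :=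
            mul_le_mul_of_nonneg_left hsum (by positivity)
        _ = 2*T := by field_simp
  · intro i a b hnall
    dsimp only
    rw [Finset.sum_eq_zero fun j _ => pflow_zero _ _ _ hnall, mul_zero]
  · intro i a ha1 ha2
    dsimp only
    rw [← Finset.mul_sum, ← Finset.mul_sum]
    congr 1
    rw [Finset.sum_comm]
    conv_rhs => rw [Finset.sum_comm]
    exact Finset.sum_congr rfl fun j _ => pflow_conserve (hPpath i j) a ha1 ha2
  · intro v
    dsimp only
    rw [← Finset.mul_sum]
    have hrw : (∑ i : Fin K, ∑ j : ↥(Finset.Icc 1 N), pflow (P i j) (Sum.inl v) (Sum.inr v))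
        = ∑ i : Fin K, ∑ j : ↥(Finset.Icc 1 N),
            (if v ∈ (P i j).support then (1:ℝ) else 0) :=
      Finset.sum_congr rfl fun i _ => Finset.sum_congr rfl fun j _ => pflow_through _ v
    rw [hrw]
    have hb : ∀ (i : Fin K) (j : ↥(Finset.Icc 1 N)),
        2 * (if v ∈ (P i j).support then (1:ℝ) else 0) ≤
        (((((P i j).darts.map SimpleGraph.Dart.toProd).toFinset.filter
          (fun e => e.1 = v ∨ e.2 = v)).card : ℕ) : ℝ)
        + (if (F i).1 = v ∨ (F i).2 = v then 1 else 0) := by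
      intro i j
      have h := touch_bound (hPpath i j) (hne i) v
      have h' := (Nat.cast_le (α := ℝ)).mpr h
      push_cast at h'
      have hiff : (v = (F i).1 ∨ v = (F i).2) ↔ ((F i).1 = v ∨ (F i).2 = v) :=
        or_congr eq_comm eq_comm
      rw [if_congr hiff rfl rfl] at h'
      exact h'
    have hcount := count_rounds σ (fun j : ↥(Finset.Icc 1 N) => (j:ℕ))
      Subtype.val_injective P hPev v
    have hcountR : (∑ i : Fin K, ∑ j : ↥(Finset.Icc 1 N),
        ((((((P i j).darts.map SimpleGraph.Dart.toProd).toFinset.filter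
          (fun e => e.1 = v ∨ e.2 = v)).card : ℕ)) : ℝ)) ≤ (R:ℝ) + 1 := by
      exact_mod_cast hcount
    have hsrc : (∑ i : Fin K, ∑ j : ↥(Finset.Icc 1 N),
        (if (F i).1 = v ∨ (F i).2 = v then (1:ℝ) else 0)) = (N:ℝ) * (tOcc F v : ℝ) := by
      have hinner : ∀ i : Fin K, (∑ _j : ↥(Finset.Icc 1 N),
          (if (F i).1 = v ∨ (F i).2 = v then (1:ℝ) else 0))
          = (N:ℝ) * (if (F i).1 = v ∨ (F i).2 = v then (1:ℝ) else 0) := by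
        intro i
        rw [Finset.sum_const, Finset.card_univ, nsmul_eq_mul, hcardJ]
      rw [Finset.sum_congr rfl fun i _ => hinner i, ← Finset.mul_sum, Finset.sum_boole]
      unfold tOcc
      norm_cast
    have h2le : 2 * (∑ i : Fin K, ∑ j : ↥(Finset.Icc 1 N),
        (if v ∈ (P i j).support then (1:ℝ) else 0)) ≤ ((R:ℝ) + 1) + (N:ℝ) * (tOcc F v : ℝ) := by
      rw [Finset.mul_sum]
      calc (∑ i : Fin K, 2 * ∑ j : ↥(Finset.Icc 1 N),
            (if v ∈ (P i j).support then (1:ℝ) else 0))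
          = ∑ i : Fin K, ∑ j : ↥(Finset.Icc 1 N),
            2 * (if v ∈ (P i j).support then (1:ℝ) else 0) := by
            exact Finset.sum_congr rfl fun i _ => Finset.mul_sum _ _ _
        _ ≤ ∑ i : Fin K, ∑ j : ↥(Finset.Icc 1 N),
            ((((((P i j).darts.map SimpleGraph.Dart.toProd).toFinset.filter
              (fun e => e.1 = v ∨ e.2 = v)).card : ℕ) : ℝ)
            + (if (F i).1 = v ∨ (F i).2 = v then 1 else 0)) :=
            Finset.sum_le_sum fun i _ => Finset.sum_le_sum fun j _ => hb i j
        _ = (∑ i : Fin K, ∑ j : ↥(Finset.Icc 1 N),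
              ((((((P i j).darts.map SimpleGraph.Dart.toProd).toFinset.filter
                (fun e => e.1 = v ∨ e.2 = v)).card : ℕ)) : ℝ))
            + ∑ i : Fin K, ∑ j : ↥(Finset.Icc 1 N),
              (if (F i).1 = v ∨ (F i).2 = v then (1:ℝ) else 0) := by
            rw [← Finset.sum_add_distrib]
            exact Finset.sum_congr rfl fun i _ => Finset.sum_add_distrib
        _ ≤ ((R:ℝ) + 1) + (N:ℝ) * (tOcc F v : ℝ) := by
            rw [hsrc]
            exact add_le_add hcountR le_rfl
    have hstep : (2*T/(N:ℝ)) * (∑ i : Fin K, ∑ j : ↥(Finset.Icc 1 N),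
        (if v ∈ (P i j).support then (1:ℝ) else 0))
        ≤ T * ((R:ℝ)+1) / (N:ℝ) + (tOcc F v : ℝ) * T := by
      have hA : (∑ i : Fin K, ∑ j : ↥(Finset.Icc 1 N),
          (if v ∈ (P i j).support then (1:ℝ) else 0))
          ≤ (((R:ℝ) + 1) + (N:ℝ) * (tOcc F v : ℝ)) / 2 := by linarith
      calc (2*T/(N:ℝ)) * (∑ i : Fin K, ∑ j : ↥(Finset.Icc 1 N),
            (if v ∈ (P i j).support then (1:ℝ) else 0))
          ≤ (2*T/(N:ℝ)) * ((((R:ℝ) + 1) + (N:ℝ) * (tOcc F v : ℝ)) / 2) :=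
            mul_le_mul_of_nonneg_left hA (by positivity)
        _ = T * ((R:ℝ)+1) / (N:ℝ) + (tOcc F v : ℝ) * T := by
            field_simp
    refine le_trans hstep ?_
    have h1 : (0:ℝ) < T * R - 1 := by linarith
    have h3 : T * (R:ℝ) - 1 ≤ (N:ℝ) := le_of_lt (Nat.sub_one_lt_floor (T * (R:ℝ)))
    have h4 : T * ((R:ℝ)+1) / (N:ℝ) ≤ T * ((R:ℝ)+1) / (T * (R:ℝ) - 1) := by
      gcongr
    linarith
  · intro i
    dsimp only
    have hterm : (2*T/(N:ℝ)) * ∑ j : ↥(Finset.Icc 1 N), pflow (P i j) (Sum.inl (F i).1) (Sum.inr (F i).1)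
        = 2*T := by
      have : ∀ j : ↥(Finset.Icc 1 N), pflow (P i j) (Sum.inl (F i).1) (Sum.inr (F i).1) = 1 := by
        intro j
        rw [pflow_through, if_pos ((P i j).start_mem_support)]
      rw [Finset.sum_congr rfl fun j _ => this j, Finset.sum_const, Finset.card_univ,
        nsmul_eq_mul, mul_one, hcardJ]
      field_simp
    calc (2:ℝ)*T = _ := hterm.symm
      _ ≤ ∑ b : V ⊕ V, (2*T/(N:ℝ)) * ∑ j : ↥(Finset.Icc 1 N), pflow (P i j) (Sum.inl (F i).1) b := by
          refine Finset.single_le_sum (f := fun b => (2*T/(N:ℝ)) * ∑ j : ↥(Finset.Icc 1 N),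
            pflow (P i j) (Sum.inl (F i).1) b) (fun b _ => ?_) (Finset.mem_univ _)
          exact mul_nonneg (by positivity) (Finset.sum_nonneg fun j _ => pflow_nonneg _ _ _)

end Stmt13Aux

open Stmt13Aux Finset SimpleGraph Filter Topology in
/-- If a schedule achieves pairwise throughput `T` on `(G, F)` (with `F` consisting of
disjoint source/destination pairs), then the flow network `D_{2T}` admits a concurrent
multi-commodity flow of value `2T`; consequently, if `τ*` is the largest `τ` such that `D_τ`
has a concurrent flow of value `τ`, then `T ≤ τ*/2`. -/
theorem stmt_13 {V : Type*} [Fintype V] [DecidableEq V] (G : SimpleGraph V) {K : ℕ}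
    (hK : 1 ≤ K) (F : Fin K → V × V)
    (hne : ∀ i : Fin K, (F i).1 ≠ (F i).2)
    (hdisj : ∀ i j : Fin K, i ≠ j →
      (F i).1 ≠ (F j).1 ∧ (F i).1 ≠ (F j).2 ∧ (F i).2 ≠ (F j).1 ∧ (F i).2 ≠ (F j).2)
    (σ : PairSchedule G F) (T : ℝ) (hT : 0 < T) (hthru : PThroughput σ T) :
    (∃ f : Fin K → (V ⊕ V) → (V ⊕ V) → ℝ, IsSplitFlow G F (2 * T) f (2 * T)) ∧
    (∀ τs : ℝ,
      IsGreatest {τ : ℝ | ∃ f : Fin K → (V ⊕ V) → (V ⊕ V) → ℝ, IsSplitFlow G F τ f τ} τs →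
      T ≤ τs / 2) := by

  classical
  obtain ⟨r0, hr0⟩ := hthru
  set M0 : ℕ := max r0 ⌈2/T⌉₊ with hM0
  set R : ℕ → ℕ := fun n => n + M0 with hR
  have hRr0 : ∀ n, r0 ≤ R n := fun n => le_trans (le_max_left _ _) (Nat.le_add_left _ _)
  have hTR2 : ∀ n, (2:ℝ) ≤ T * (R n : ℝ) := by
    intro n
    have h1 : (2:ℝ)/T ≤ (⌈2/T⌉₊ : ℝ) := Nat.le_ceil _
    have h2 : ((⌈2/T⌉₊ : ℕ) : ℝ) ≤ ((R n : ℕ) : ℝ) := by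
      exact_mod_cast le_trans (le_max_right r0 _) (Nat.le_add_left _ _)
    have h3 : (2:ℝ)/T ≤ (R n : ℝ) := le_trans h1 h2
    calc (2:ℝ) = T * (2/T) := by field_simp
      _ ≤ T * (R n : ℝ) := mul_le_mul_of_nonneg_left h3 (le_of_lt hT)
  have key : ∀ n : ℕ, ∃ f : Fin K → (V ⊕ V) → (V ⊕ V) → ℝ,
      (∀ (i : Fin K) (a b : V ⊕ V), f i a b ∈ Set.Icc (0:ℝ) (2*T)) ∧
      (∀ (i : Fin K) (a b : V ⊕ V),
        ¬ ((∃ u w : V, a = Sum.inr u ∧ b = Sum.inl w ∧ G.Adj u w) ∨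
          (∃ w : V, a = Sum.inl w ∧ b = Sum.inr w)) → f i a b = 0) ∧
      (∀ (i : Fin K) (a : V ⊕ V), a ≠ Sum.inl (F i).1 → a ≠ Sum.inr (F i).2 →
        ∑ b : V ⊕ V, f i b a = ∑ b : V ⊕ V, f i a b) ∧
      (∀ v : V, ∑ i : Fin K, f i (Sum.inl v) (Sum.inr v) ≤
        T * ((R n : ℝ)+1) / (T * (R n) - 1) + (tOcc F v : ℝ) * T) ∧
      (∀ i : Fin K, 2*T ≤ ∑ b : V ⊕ V, f i (Sum.inl (F i).1) b) :=
    fun n => keyLemma hne σ hT hr0 (hRr0 n) (hTR2 n)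
  choose u h1 h2 h3 h4 h5 using key
  -- compactness
  have hS : IsCompact {g : Fin K → (V ⊕ V) → (V ⊕ V) → ℝ |
      ∀ i a b, g i a b ∈ Set.Icc (0:ℝ) (2*T)} := by
    have heq : {g : Fin K → (V ⊕ V) → (V ⊕ V) → ℝ | ∀ i a b, g i a b ∈ Set.Icc (0:ℝ) (2*T)}
        = Set.pi Set.univ (fun _ : Fin K => Set.pi Set.univ (fun _ : V ⊕ V =>
            Set.pi Set.univ (fun _ : V ⊕ V => Set.Icc (0:ℝ) (2*T)))) := by
      ext g; simp only [Set.mem_setOf_eq, Set.mem_pi, Set.mem_univ, true_implies]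
    rw [heq]
    exact isCompact_univ_pi fun _ => isCompact_univ_pi fun _ =>
      isCompact_univ_pi fun _ => isCompact_Icc
  obtain ⟨f, hfS, φ, hφ, hconv⟩ := hS.tendsto_subseq (fun n => h1 n)
  have hcoord : ∀ i a b, Tendsto (fun n => u (φ n) i a b) atTop (𝓝 (f i a b)) := by
    intro i a b
    have c1 : Continuous (fun g : Fin K → (V ⊕ V) → (V ⊕ V) → ℝ => g i) := continuous_apply i
    have c2 : Continuous (fun h : (V ⊕ V) → (V ⊕ V) → ℝ => h a) := continuous_apply a
    have c3 : Continuous (fun k : (V ⊕ V) → ℝ => k b) := continuous_apply b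
    exact ((c3.comp (c2.comp c1)).tendsto f).comp hconv
  -- limits of the key properties
  have hflow : IsSplitFlow G F (2*T) f (2*T) := by
    refine ⟨fun i a b => (hfS i a b).1, ?_, ?_, ?_, ?_⟩
    · intro i a b hne0
      by_contra hnall
      have hz : (fun n => u (φ n) i a b) = fun _ => (0:ℝ) :=
        funext fun n => h2 (φ n) i a b hnall
      have ht := hcoord i a b
      rw [hz] at ht
      exact hne0 (tendsto_nhds_unique ht tendsto_const_nhds)
    · intro i a ha1 ha2
      have hA : Tendsto (fun n => ∑ b : V ⊕ V, u (φ n) i b a) atTop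
          (𝓝 (∑ b : V ⊕ V, f i b a)) := tendsto_finset_sum _ fun b _ => hcoord i b a
      have hB : Tendsto (fun n => ∑ b : V ⊕ V, u (φ n) i a b) atTop
          (𝓝 (∑ b : V ⊕ V, f i a b)) := tendsto_finset_sum _ fun b _ => hcoord i a b
      have he : (fun n => ∑ b : V ⊕ V, u (φ n) i b a)
          = (fun n => ∑ b : V ⊕ V, u (φ n) i a b) :=
        funext fun n => h3 (φ n) i a ha1 ha2
      rw [he] at hA
      exact tendsto_nhds_unique hA hB
    · intro v
      have hA : Tendsto (fun n => ∑ i : Fin K, u (φ n) i (Sum.inl v) (Sum.inr v)) atTop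
          (𝓝 (∑ i : Fin K, f i (Sum.inl v) (Sum.inr v))) :=
        tendsto_finset_sum _ fun i _ => hcoord i _ _
      have hxat : Tendsto (fun m => T * ((R m : ℕ) : ℝ) - 1) atTop atTop := by
        have hr1 : Tendsto (fun m => ((R m : ℕ) : ℝ)) atTop atTop := by
          apply tendsto_natCast_atTop_atTop.comp
          exact tendsto_add_atTop_nat M0
        have hr2 : Tendsto (fun m => T * ((R m : ℕ) : ℝ)) atTop atTop :=
          hr1.const_mul_atTop hT
        simpa [sub_eq_add_neg] using tendsto_atTop_add_const_right atTop (-1) hr2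
      have hquot : Tendsto (fun m => (T+1)/(T * ((R m : ℕ):ℝ) - 1)) atTop (𝓝 0) :=
        Tendsto.div_atTop tendsto_const_nhds hxat
      have heq : (fun m => T * (((R m : ℕ):ℝ)+1)/(T * ((R m:ℕ):ℝ) - 1))
          = fun m => 1 + (T+1)/(T * ((R m:ℕ):ℝ) - 1) := by
        funext m
        have hpos : (0:ℝ) < T * ((R m:ℕ):ℝ) - 1 := by linarith [hTR2 m]
        field_simp
        ring
      have hBase : Tendsto (fun m => T * (((R m:ℕ):ℝ)+1)/(T * ((R m:ℕ):ℝ) - 1))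
          atTop (𝓝 1) := by
        rw [heq]
        simpa using tendsto_const_nhds.add hquot
      have hB : Tendsto (fun n => T * (((R (φ n) : ℕ):ℝ)+1)/(T * ((R (φ n):ℕ):ℝ) - 1)
          + (tOcc F v : ℝ) * T) atTop (𝓝 (1 + (tOcc F v : ℝ) * T)) :=
        (hBase.comp hφ.tendsto_atTop).add tendsto_const_nhds
      have hle := le_of_tendsto_of_tendsto' hA hB (fun n => h4 (φ n) v)
      have hring : (tOcc F v : ℝ) * (2*T)/2 = (tOcc F v : ℝ) * T := by ring
      linarith
    · intro i
      exact ge_of_tendsto' (tendsto_finset_sum _ fun b _ => hcoord i _ b)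
        (fun n => h5 (φ n) i)
  refine ⟨⟨f, hflow⟩, fun τs hg => ?_⟩
  have h2T : (2*T) ∈ {τ : ℝ | ∃ f, IsSplitFlow G F τ f τ} := ⟨f, hflow⟩
  have := hg.2 h2T
  linarith
end

section
/- Consider a unit square partitioned into boxes of side length r and regions of 3×3 boxes, with n points placed independently and uniformly at random. If the eight boundary boxes of some region are empty and a point u lies in the center box of that region while another point v lies outside that box, and points within Euclidean distance r are joined by an edge, then u and v are in different connected components of the resulting graph. -/
/-- The point `x` of the plane lies in the grid box with indices `(a, b)` of side length `r`. -/
def InBox (r : ℝ) (a b : ℤ) (x : EuclideanSpace ℝ (Fin 2)) : Prop :=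
  (a : ℝ) * r ≤ x 0 ∧ x 0 < ((a : ℝ) + 1) * r ∧
  (b : ℝ) * r ≤ x 1 ∧ x 1 < ((b : ℝ) + 1) * r

lemma coord_dist_le (x y : EuclideanSpace ℝ (Fin 2)) (i : Fin 2) :
    |x i - y i| ≤ dist x y := by
  rw [EuclideanSpace.dist_eq]
  rw [← Real.dist_eq]
  rw [← Real.sqrt_sq dist_nonneg]
  apply Real.sqrt_le_sqrt
  exact Finset.single_le_sum (f := fun j => dist (x j) (y j) ^ 2)
    (fun j _ => sq_nonneg _) (Finset.mem_univ i)

/-- Tile the plane by boxes of side `r` and consider the 3×3 region of boxes centered at box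
`(a, b)`.  If the eight boundary boxes of the region contain no points, a point `u` lies in
the center box and a point `v` lies outside it, then `u` and `v` lie in different connected
components of the geometric graph joining points at Euclidean distance at most `r`. -/
theorem stmt_14 (n : ℕ) (r : ℝ) (hr : 0 < r) (p : Fin n → EuclideanSpace ℝ (Fin 2))
    (a b : ℤ)
    (hempty : ∀ i : Fin n, ∀ da db : ℤ, ¬(da = 0 ∧ db = 0) → |da| ≤ 1 → |db| ≤ 1 →
      ¬ InBox r (a + da) (b + db) (p i))
    (u v : Fin n) (hu : InBox r a b (p u)) (hv : ¬ InBox r a b (p v)) :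
    ¬ (SimpleGraph.fromRel (fun i j : Fin n => dist (p i) (p j) ≤ r)).Reachable u v := by
  set G := SimpleGraph.fromRel (fun i j : Fin n => dist (p i) (p j) ≤ r) with hG
  -- one step preserves being in the center box
  have step : ∀ s t : Fin n, G.Adj s t → InBox r a b (p s) → InBox r a b (p t) := by
    intro s t hadj hs
    have hd : dist (p s) (p t) ≤ r := by
      rcases hadj.2 with h | h
      · exact h
      · rwa [dist_comm]
    have h0 : |p s 0 - p t 0| ≤ r := (coord_dist_le (p s) (p t) 0).trans hd
    have h1 : |p s 1 - p t 1| ≤ r := (coord_dist_le (p s) (p t) 1).trans hd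
    rw [abs_sub_le_iff] at h0 h1
    obtain ⟨ha1, ha2, hb1, hb2⟩ := hs
    set c : ℤ := ⌊p t 0 / r⌋ with hc
    set d : ℤ := ⌊p t 1 / r⌋ with hdd
    have hct : InBox r c d (p t) := by
      refine ⟨?_, ?_, ?_, ?_⟩
      · have := Int.floor_le (p t 0 / r)
        calc (c : ℝ) * r ≤ (p t 0 / r) * r := by nlinarith
          _ = p t 0 := by field_simp
      · have := Int.lt_floor_add_one (p t 0 / r)
        have : p t 0 / r < (c : ℝ) + 1 := by push_cast; linarith
        calc p t 0 = (p t 0 / r) * r := by field_simp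
          _ < ((c : ℝ) + 1) * r := by nlinarith
      · have := Int.floor_le (p t 1 / r)
        calc (d : ℝ) * r ≤ (p t 1 / r) * r := by nlinarith
          _ = p t 1 := by field_simp
      · have := Int.lt_floor_add_one (p t 1 / r)
        have : p t 1 / r < (d : ℝ) + 1 := by push_cast; linarith
        calc p t 1 = (p t 1 / r) * r := by field_simp
          _ < ((d : ℝ) + 1) * r := by nlinarith
    -- bounds on c and d
    have hcl : a - 1 ≤ c := by
      rw [hc, Int.le_floor]
      push_cast
      rw [le_div_iff₀ hr]
      nlinarith
    have hcu : c ≤ a + 1 := by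
      have : c < a + 2 := by
        rw [hc, Int.floor_lt]
        push_cast
        rw [div_lt_iff₀ hr]
        nlinarith
      omega
    have hdl : b - 1 ≤ d := by
      rw [hdd, Int.le_floor]
      push_cast
      rw [le_div_iff₀ hr]
      nlinarith
    have hdu : d ≤ b + 1 := by
      have : d < b + 2 := by
        rw [hdd, Int.floor_lt]
        push_cast
        rw [div_lt_iff₀ hr]
        nlinarith
      omega
    have hca : c = a ∧ d = b := by
      by_contra hne
      apply hempty t (c - a) (d - b) (by omega) (abs_le.mpr ⟨by omega, by omega⟩) (abs_le.mpr ⟨by omega, by omega⟩)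
      have : a + (c - a) = c := by ring
      rw [this]
      have : b + (d - b) = d := by ring
      rw [this]
      exact hct
    rw [hca.1, hca.2] at hct
    exact hct
  intro hreach
  obtain ⟨w⟩ := hreach
  have key : ∀ s t : Fin n, G.Walk s t → InBox r a b (p s) → InBox r a b (p t) := by
    intro s t w
    induction w with
    | nil => exact id
    | cons h _ ih => intro hs; exact ih (step _ _ h hs)
  exact hv (key u v w hu)
end

section
/- If a graph G on n vertices generated by placing points in a unit square covered by a k×k grid has at least one vertex in every grid box, and vertices in boxes sharing a side are adjacent, then G has a spanning tree of maximum degree at most 5; hence d(G) ≤ 5. -/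
open SimpleGraph

/-- `d(G)`: the minimum over spanning trees of `G` of the maximum degree of the tree. -/
noncomputable def minSpanningDegree {V : Type*} (G : SimpleGraph V) : ℕ :=
  sInf {k : ℕ | ∃ T : SimpleGraph V, T ≤ G ∧ T.IsTree ∧ ∀ v : V, Nat.card (T.neighborSet v) ≤ k}

/-- Two boxes of a `k × k` grid share a side. -/
def GridAdj (k : ℕ) (p q : Fin k × Fin k) : Prop :=
  (p.1 = q.1 ∧ ((p.2 : ℕ) + 1 = (q.2 : ℕ) ∨ (q.2 : ℕ) + 1 = (p.2 : ℕ))) ∨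
  (p.2 = q.2 ∧ ((p.1 : ℕ) + 1 = (q.1 : ℕ) ∨ (q.1 : ℕ) + 1 = (p.1 : ℕ)))

/-- dominance of base-`n` keys -/
private lemma key_mono {a b c d n : ℕ} (hb : b < n) (h : a < c) :
    a * n + b < c * n + d := by
  have h1 : a * n + b < (a + 1) * n := by
    have : (a + 1) * n = a * n + n := by ring
    omega
  have h2 : (a + 1) * n ≤ c * n := Nat.mul_le_mul_right n h
  omega

private lemma base_repr {a b c d n : ℕ} (hb : b < n) (hd : d < n)
    (h : a * n + b = c * n + d) : a = c ∧ b = d := by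
  rcases Nat.lt_trichotomy a c with h1 | h1 | h1
  · exact absurd h (Nat.ne_of_lt (key_mono hb h1))
  · subst h1; omega
  · exact absurd h.symm (Nat.ne_of_lt (key_mono hd h1))

/-- offset within a row of the snake order -/
private def snakeOff (k i j : ℕ) : ℕ := if i % 2 = 0 then j else k - 1 - j

private lemma snakeOff_lt {k i j : ℕ} (hj : j < k) : snakeOff k i j < k := by
  unfold snakeOff; split <;> omega

private lemma snakeOff_invol {k i j : ℕ} (hj : j < k) :
    snakeOff k i (snakeOff k i j) = j := by
  unfold snakeOff; split <;> omega

/-- snake (boustrophedon) index of a grid box -/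
private def snake (k : ℕ) (p : Fin k × Fin k) : ℕ :=
  (p.1 : ℕ) * k + snakeOff k (p.1 : ℕ) (p.2 : ℕ)

private lemma snake_lt {k : ℕ} (p : Fin k × Fin k) : snake k p < k * k := by
  have h1 : (p.1 : ℕ) < k := p.1.isLt
  have h2 := snakeOff_lt (k := k) (i := (p.1 : ℕ)) p.2.isLt
  have h3 : ((p.1 : ℕ) + 1) * k ≤ k * k := Nat.mul_le_mul_right k h1
  unfold snake
  have : ((p.1 : ℕ) + 1) * k = (p.1 : ℕ) * k + k := by ring
  omega

private lemma snake_inj {k : ℕ} : Function.Injective (snake k) := by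
  intro p q h
  obtain ⟨h1, h2⟩ := base_repr (snakeOff_lt p.2.isLt) (snakeOff_lt q.2.isLt) h
  rw [h1] at h2
  have h3 : (p.2 : ℕ) = (q.2 : ℕ) := by
    unfold snakeOff at h2
    have := p.2.isLt; have := q.2.isLt
    split at h2 <;> omega
  exact Prod.ext (Fin.ext h1) (Fin.ext h3)

private lemma snake_surj {k : ℕ} (hk : 1 ≤ k) {m : ℕ} (hm : m < k * k) :
    ∃ p : Fin k × Fin k, snake k p = m := by
  have hk0 : 0 < k := hk
  have h1 : m / k < k := Nat.div_lt_iff_lt_mul hk0 |>.2 hm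
  have h2 : m % k < k := Nat.mod_lt _ hk0
  refine ⟨(⟨m / k, h1⟩, ⟨snakeOff k (m / k) (m % k), snakeOff_lt h2⟩), ?_⟩
  show m / k * k + snakeOff k (m / k) (snakeOff k (m / k) (m % k)) = m
  rw [snakeOff_invol h2]
  have h3 : k * (m / k) + m % k = m := Nat.div_add_mod m k
  have h4 : k * (m / k) = m / k * k := Nat.mul_comm _ _
  omega

private lemma snake_succ {k : ℕ} (hk : 1 ≤ k) {p q : Fin k × Fin k}
    (h : snake k q = snake k p + 1) : GridAdj k p q := by
  have hj : (p.2 : ℕ) < k := p.2.isLt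
  have hj' : (q.2 : ℕ) < k := q.2.isLt
  have hi : (p.1 : ℕ) < k := p.1.isLt
  by_cases hb : snakeOff k (p.1 : ℕ) (p.2 : ℕ) + 1 < k
  · -- stay in the same row
    have h' : (q.1 : ℕ) * k + snakeOff k (q.1 : ℕ) (q.2 : ℕ)
        = (p.1 : ℕ) * k + (snakeOff k (p.1 : ℕ) (p.2 : ℕ) + 1) := by
      unfold snake at h; omega
    obtain ⟨h1, h2⟩ := base_repr (snakeOff_lt q.2.isLt) hb h'
    rw [h1] at h2
    left
    refine ⟨(Fin.ext h1).symm, ?_⟩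
    unfold snakeOff at h2
    split at h2 <;> omega
  · -- move to the next row
    have hb2 : snakeOff k (p.1 : ℕ) (p.2 : ℕ) = k - 1 := by
      have := snakeOff_lt (k := k) (i := (p.1 : ℕ)) hj; omega
    have h' : (q.1 : ℕ) * k + snakeOff k (q.1 : ℕ) (q.2 : ℕ)
        = ((p.1 : ℕ) + 1) * k + 0 := by
      unfold snake at h
      have : ((p.1 : ℕ) + 1) * k = (p.1 : ℕ) * k + k := by ring
      omega
    obtain ⟨h1, h2⟩ := base_repr (snakeOff_lt q.2.isLt) hk h'
    right
    refine ⟨?_, Or.inl h1.symm⟩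
    apply Fin.ext
    unfold snakeOff at hb2 h2
    rcases Nat.even_or_odd (p.1 : ℕ) with he | ho
    · have he' : (p.1 : ℕ) % 2 = 0 := Nat.even_iff.mp he
      rw [if_pos he'] at hb2
      rw [h1, if_neg (by omega : ¬ ((p.1 : ℕ) + 1) % 2 = 0)] at h2
      omega
    · have ho' : (p.1 : ℕ) % 2 = 1 := Nat.odd_iff.mp ho
      rw [if_neg (by omega)] at hb2
      rw [h1, if_pos (by omega : ((p.1 : ℕ) + 1) % 2 = 0)] at h2
      omega

private lemma reach_inv {V : Type*} {H : SimpleGraph V} {f : V → Bool}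
    (hf : ∀ a b, H.Adj a b → f a = f b) {u v : V} (h : H.Reachable u v) :
    f u = f v := by
  obtain ⟨w⟩ := h
  induction w with
  | nil => rfl
  | cons h p ih => exact (hf _ _ h).trans ih

private lemma pathGraph_isAcyclic (n : ℕ) : (pathGraph n).IsAcyclic := by
  rw [isAcyclic_iff_forall_adj_isBridge]
  intro v w hvw
  rw [isBridge_iff]
  refine fun hr => ?_
  rw [pathGraph_adj] at hvw
  have key := reach_inv
    (f := fun u : Fin n => decide ((u : ℕ) ≤ min (v : ℕ) (w : ℕ))) ?_ hr
  · simp only [decide_eq_decide] at key; omega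
  · intro a b hab
    rw [deleteEdges_adj] at hab
    obtain ⟨hab1, hab2⟩ := hab
    have hne : a ≠ b := hab1.ne
    rw [pathGraph_adj] at hab1
    have hs : ¬ ((a = v ∧ b = w) ∨ (a = w ∧ b = v)) := by
      intro hcon
      exact hab2 (by rw [Set.mem_singleton_iff, Sym2.eq_iff]; exact hcon)
    simp only [decide_eq_decide]
    rw [not_or, not_and_or, not_and_or] at hs
    obtain ⟨e1, e2⟩ := hs
    rw [Fin.ext_iff] at e1 e2
    omega

/-- If the vertices of a finite graph `G` are assigned to the boxes of a `k × k` grid so that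
every box is nonempty, vertices in the same box are adjacent, and vertices in boxes sharing a
side are adjacent, then `G` has a spanning tree of maximum degree at most `5`; hence
`d(G) ≤ 5`. -/
theorem stmt_16 {V : Type*} [Fintype V] (G : SimpleGraph V) (k : ℕ) (hk : 1 ≤ k)
    (β : V → Fin k × Fin k) (hsurj : Function.Surjective β)
    (hsame : ∀ u v : V, u ≠ v → β u = β v → G.Adj u v)
    (hadj : ∀ u v : V, GridAdj k (β u) (β v) → G.Adj u v) :
    (∃ T : SimpleGraph V, T ≤ G ∧ T.IsTree ∧ ∀ v : V, Nat.card (T.neighborSet v) ≤ 5) ∧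
    minSpanningDegree G ≤ 5 := by
  classical
  have hV : Nonempty V := by
    obtain ⟨x, -⟩ := hsurj (⟨0, hk⟩, ⟨0, hk⟩)
    exact ⟨x⟩
  set n := Fintype.card V with hn
  have hn0 : 0 < n := Fintype.card_pos
  set ι : V ≃ Fin n := Fintype.equivFin V with hι
  set keyf : V → ℕ := fun v => snake k (β v) * n + (ι v : ℕ) with hkeyf
  have hkeyinj : Function.Injective keyf := by
    intro a b h
    obtain ⟨-, h2⟩ := base_repr (ι a).isLt (ι b).isLt h
    exact ι.injective (Fin.ext h2)
  letI : LinearOrder V := LinearOrder.lift' keyf hkeyinj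
  have hle : ∀ a b : V, a ≤ b ↔ keyf a ≤ keyf b := fun a b => Iff.rfl
  have hlt : ∀ a b : V, a < b ↔ keyf a < keyf b := by
    intro a b
    rw [lt_iff_le_not_ge, hle, hle]
    omega
  set e : Fin n ≃o V := monoEquivOfFin V rfl with he
  -- consecutive vertices in the snake order are adjacent in G
  have hconsec : ∀ u w : V, (e.symm u : ℕ) + 1 = (e.symm w : ℕ) → G.Adj u w := by
    intro u w hij
    have hne : u ≠ w := by
      intro h; rw [h] at hij; omega
    have hulw : u < w := e.symm.lt_iff_lt.1 (by rw [Fin.lt_iff_val_lt_val]; omega)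
    have hkuw : keyf u < keyf w := (hlt u w).1 hulw
    have hno : ∀ x : V, ¬(keyf u < keyf x ∧ keyf x < keyf w) := by
      rintro x ⟨h1, h2⟩
      have hx1 : u < x := (hlt u x).2 h1
      have hx2 : x < w := (hlt x w).2 h2
      have hx1' : e.symm u < e.symm x := e.symm.lt_iff_lt.2 hx1
      have hx2' : e.symm x < e.symm w := e.symm.lt_iff_lt.2 hx2
      rw [Fin.lt_iff_val_lt_val] at hx1' hx2'
      omega
    set su := snake k (β u) with hsu
    set sw := snake k (β w) with hsw
    have hsule : su ≤ sw := by
      by_contra hcon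
      have : keyf w < keyf u := key_mono (ι w).isLt (by omega)
      omega
    rcases Nat.eq_or_lt_of_le hsule with heq | hlt2
    · exact hsame u w hne (snake_inj heq)
    · have hsucc : sw = su + 1 := by
        by_contra hss
        have h2 : su + 1 < sw := by omega
        have hsu1 : su + 1 < k * k := lt_of_lt_of_le h2 (le_of_lt (snake_lt (β w)))
        obtain ⟨p, hp⟩ := snake_surj hk hsu1
        obtain ⟨x, hx⟩ := hsurj p
        refine hno x ⟨?_, ?_⟩
        · have : keyf x = (su + 1) * n + (ι x : ℕ) := by
            simp only [hkeyf, hx, hp]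
          rw [this]; exact key_mono (ι u).isLt (by omega)
        · have : keyf x = (su + 1) * n + (ι x : ℕ) := by
            simp only [hkeyf, hx, hp]
          rw [this]; exact key_mono (ι x).isLt h2
      exact hadj u w (snake_succ hk (by omega))
  -- the spanning path
  set T : SimpleGraph V := (pathGraph n).comap (e.symm : V ≃ Fin n).toEmbedding with hT
  have hTadj : ∀ u w : V, T.Adj u w ↔ (pathGraph n).Adj (e.symm u) (e.symm w) := by
    intro u w; rfl
  have hTG : T ≤ G := by
    intro u w h
    rw [hTadj, pathGraph_adj] at h
    rcases h with h | h
    · exact hconsec u w h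
    · exact (hconsec w u h).symm
  set φ : T ≃g pathGraph n := Iso.comap (e.symm : V ≃ Fin n) (pathGraph n) with hφ
  have hTtree : T.IsTree := by
    constructor
    · rw [φ.connected_iff, connected_iff]
      exact ⟨pathGraph_preconnected n, ⟨⟨0, hn0⟩⟩⟩
    · intro v c hc
      exact pathGraph_isAcyclic n (c.map φ.toHom)
        ((SimpleGraph.Walk.map_isCycle_iff_of_injective φ.injective).2 hc)
  have hdeg : ∀ v : V, Nat.card (T.neighborSet v) ≤ 5 := by
    intro v
    have hinj : Function.Injective
        (fun u : T.neighborSet v => decide ((e.symm v : ℕ) + 1 = (e.symm (u : V) : ℕ))) := by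
      rintro ⟨u1, hu1⟩ ⟨u2, hu2⟩ h
      have h1 : (pathGraph n).Adj (e.symm v) (e.symm u1) := (hTadj v u1).1 hu1
      have h2 : (pathGraph n).Adj (e.symm v) (e.symm u2) := (hTadj v u2).1 hu2
      rw [pathGraph_adj] at h1 h2
      simp only [decide_eq_decide] at h
      have heq : (e.symm u1 : Fin n) = e.symm u2 := Fin.ext (by omega)
      exact Subtype.ext (e.toEquiv.symm.injective heq)
    calc Nat.card (T.neighborSet v) ≤ Nat.card Bool :=
          Nat.card_le_card_of_injective _ hinj
      _ ≤ 5 := by simp [Nat.card_eq_fintype_card]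
  refine ⟨⟨T, hTG, hTtree, hdeg⟩, ?_⟩
  exact Nat.sInf_le ⟨T, hTG, hTtree, hdeg⟩
end
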